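/- Let ν and ν' be discrete probability distributions on the real line supported on finite sets S and S' respectively, and let ε be the minimum of the smallest point mass of ν and the smallest point mass of ν'. Then the Hausdorff distance between S and S' is at most W₁(ν,ν')/ε, where W₁ denotes the 1-Wasserstein distance. -/

import Mathlib

open MeasureTheory

/-- The 1-Wasserstein distance between two measures on `ℝ`, defined as the infimum of
`E|X - Y|` over all couplings. -/
noncomputable def W1 (μ ν : Measure ℝ) : ℝ :=
  sInf {c : ℝ | ∃ π : Measure (ℝ × ℝ), IsProbabilityMeasure π ∧
    π.map Prod.fst = μ ∧ π.map Prod.snd = ν ∧ c = ∫ p, |p.1 - p.2| ∂π}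

lemma compl_null (ν : Measure ℝ) [IsProbabilityMeasure ν] (S : Finset ℝ)
    (hsupp : ν ↑S = 1) : ν (↑S)ᶜ = 0 := by
  rw [measure_compl S.measurableSet (measure_ne_top _ _), hsupp, measure_univ, tsub_self]

lemma integrable_absdiff (S S' : Finset ℝ) (hS : S.Nonempty) (hS' : S'.Nonempty)
    (π : Measure (ℝ × ℝ)) [IsProbabilityMeasure π]
    (h1 : π (Prod.fst ⁻¹' (↑S : Set ℝ))ᶜ = 0) (h2 : π (Prod.snd ⁻¹' (↑S' : Set ℝ))ᶜ = 0) :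
    Integrable (fun p : ℝ × ℝ => |p.1 - p.2|) π := by
  set M : ℝ := (S.sup' hS fun a => |a|) + (S'.sup' hS' fun a => |a|) with hM
  have hcont : Continuous (fun p : ℝ × ℝ => |p.1 - p.2|) :=
    (continuous_fst.sub continuous_snd).abs
  refine (integrable_const M).mono' hcont.aestronglyMeasurable ?_
  have hae : ∀ᵐ p ∂π, p.1 ∈ (↑S : Set ℝ) ∧ p.2 ∈ (↑S' : Set ℝ) := by
    filter_upwards [measure_eq_zero_iff_ae_notMem.mp h1, measure_eq_zero_iff_ae_notMem.mp h2] with p hp hq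
    exact ⟨by simpa using hp, by simpa using hq⟩
  filter_upwards [hae] with p hp
  have h1' : |p.1| ≤ S.sup' hS fun a => |a| := Finset.le_sup' _ hp.1
  have h2' : |p.2| ≤ S'.sup' hS' fun a => |a| := Finset.le_sup' _ hp.2
  have : |p.1 - p.2| ≤ |p.1| + |p.2| := abs_sub _ _
  calc ‖|p.1 - p.2|‖ = |p.1 - p.2| := by simp [abs_abs]
    _ ≤ |p.1| + |p.2| := abs_sub _ _
    _ ≤ M := add_le_add h1' h2'

lemma key_ineq (ν ν' : Measure ℝ) [IsProbabilityMeasure ν] [IsProbabilityMeasure ν']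
    (S S' : Finset ℝ) (hS : S.Nonempty) (hS' : S'.Nonempty)
    (hsupp : ν ↑S = 1) (hsupp' : ν' ↑S' = 1)
    (π : Measure (ℝ × ℝ)) [IsProbabilityMeasure π]
    (h1 : π.map Prod.fst = ν) (h2 : π.map Prod.snd = ν')
    (x : ℝ) (hx : x ∈ S) :
    Metric.infDist x ↑S' * (ν {x}).toReal ≤ ∫ p, |p.1 - p.2| ∂π := by
  have hm1 : π (Prod.fst ⁻¹' (↑S : Set ℝ))ᶜ = 0 := by
    rw [← Set.preimage_compl, ← Measure.map_apply measurable_fst S.measurableSet.compl, h1]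
    exact compl_null ν S hsupp
  have hm2 : π (Prod.snd ⁻¹' (↑S' : Set ℝ))ᶜ = 0 := by
    rw [← Set.preimage_compl, ← Measure.map_apply measurable_snd S'.measurableSet.compl, h2]
    exact compl_null ν' S' hsupp'
  have hint := integrable_absdiff S S' hS hS' π hm1 hm2
  set A : Set (ℝ × ℝ) := Prod.fst ⁻¹' {x} ∩ Prod.snd ⁻¹' (↑S' : Set ℝ) with hA
  have hAm : MeasurableSet A :=
    (measurable_fst (measurableSet_singleton x)).inter (measurable_snd S'.measurableSet)
  have hπA : π A = ν {x} := by
    rw [hA, measure_inter_conull hm2,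
      ← Measure.map_apply measurable_fst (measurableSet_singleton x), h1]
  have hlow : Metric.infDist x ↑S' * (π A).toReal ≤ ∫ p in A, |p.1 - p.2| ∂π := by
    refine setIntegral_ge_of_const_le_real hAm (measure_ne_top _ _) ?_ hint.integrableOn
    rintro p ⟨hp1, hp2⟩
    have hp1' : p.1 = x := hp1
    calc Metric.infDist x ↑S' ≤ dist x p.2 := Metric.infDist_le_dist_of_mem hp2
      _ = |p.1 - p.2| := by rw [hp1', Real.dist_eq]
  calc Metric.infDist x ↑S' * (ν {x}).toReal
      = Metric.infDist x ↑S' * (π A).toReal := by rw [hπA]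
    _ ≤ ∫ p in A, |p.1 - p.2| ∂π := hlow
    _ ≤ ∫ p, |p.1 - p.2| ∂π :=
        setIntegral_le_integral hint (Filter.Eventually.of_forall fun p => abs_nonneg _)

theorem stmt_0 (ν ν' : Measure ℝ) [IsProbabilityMeasure ν] [IsProbabilityMeasure ν']
    (S S' : Finset ℝ) (hS : S.Nonempty) (hS' : S'.Nonempty)
    (hsupp : ν ↑S = 1) (hsupp' : ν' ↑S' = 1)
    (hpos : ∀ x ∈ S, 0 < ν {x}) (hpos' : ∀ x ∈ S', 0 < ν' {x})
    (ε : ℝ)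
    (hε : ε = min (S.inf' hS fun x => (ν {x}).toReal)
                  (S'.inf' hS' fun x => (ν' {x}).toReal)) :
    Metric.hausdorffDist (↑S : Set ℝ) (↑S' : Set ℝ) ≤ W1 ν ν' / ε := by
  have hεpos : 0 < ε := by
    rw [hε]
    refine lt_min ?_ ?_
    · obtain ⟨y, hy, hyeq⟩ := S.exists_mem_eq_inf' hS fun x => (ν {x}).toReal
      rw [hyeq]
      exact ENNReal.toReal_pos (hpos y hy).ne' (measure_ne_top _ _)
    · obtain ⟨y, hy, hyeq⟩ := S'.exists_mem_eq_inf' hS' fun x => (ν' {x}).toReal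
      rw [hyeq]
      exact ENNReal.toReal_pos (hpos' y hy).ne' (measure_ne_top _ _)
  have hεν : ∀ x ∈ S, ε ≤ (ν {x}).toReal := fun x hx =>
    le_trans (hε ▸ min_le_left _ _) (Finset.inf'_le _ hx)
  have hεν' : ∀ x ∈ S', ε ≤ (ν' {x}).toReal := fun x hx =>
    le_trans (hε ▸ min_le_right _ _) (Finset.inf'_le _ hx)
  rw [le_div_iff₀ hεpos]
  -- the set of coupling costs is nonempty
  have hne : {c : ℝ | ∃ π : Measure (ℝ × ℝ), IsProbabilityMeasure π ∧
      π.map Prod.fst = ν ∧ π.map Prod.snd = ν' ∧ c = ∫ p, |p.1 - p.2| ∂π}.Nonempty := by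
    refine ⟨∫ p, |p.1 - p.2| ∂(ν.prod ν'), ν.prod ν', inferInstance, ?_, ?_, rfl⟩
    · rw [← Measure.fst, Measure.fst_prod]
    · rw [← Measure.snd, Measure.snd_prod]
  refine le_csInf hne ?_
  rintro c ⟨π, hπ, h1, h2, rfl⟩
  have hnn : (0:ℝ) ≤ ∫ p, |p.1 - p.2| ∂π := integral_nonneg fun p => abs_nonneg _
  have hD : Metric.hausdorffDist (↑S : Set ℝ) ↑S' ≤ (∫ p, |p.1 - p.2| ∂π) / ε := by
    refine Metric.hausdorffDist_le_of_infDist (div_nonneg hnn hεpos.le) ?_ ?_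
    · intro x hx
      rw [le_div_iff₀ hεpos]
      calc Metric.infDist x ↑S' * ε ≤ Metric.infDist x ↑S' * (ν {x}).toReal :=
            mul_le_mul_of_nonneg_left (hεν x hx) Metric.infDist_nonneg
        _ ≤ ∫ p, |p.1 - p.2| ∂π := key_ineq ν ν' S S' hS hS' hsupp hsupp' π h1 h2 x hx
    · intro x hx
      rw [le_div_iff₀ hεpos]
      have hswap : IsProbabilityMeasure (π.map Prod.swap) :=
        Measure.isProbabilityMeasure_map measurable_swap.aemeasurable
      have hs1 : (π.map Prod.swap).map Prod.fst = ν' := by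
        rw [Measure.map_map measurable_fst measurable_swap]
        exact h2
      have hs2 : (π.map Prod.swap).map Prod.snd = ν := by
        rw [Measure.map_map measurable_snd measurable_swap]
        exact h1
      have heq : ∫ p, |p.1 - p.2| ∂(π.map Prod.swap) = ∫ p, |p.1 - p.2| ∂π := by
        rw [integral_map (f := fun p : ℝ × ℝ => |p.1 - p.2|) measurable_swap.aemeasurable
          ((continuous_fst.sub continuous_snd).abs).aestronglyMeasurable]
        simp only [Prod.fst_swap, Prod.snd_swap]
        exact integral_congr_ae (Filter.Eventually.of_forall fun p => abs_sub_comm _ _)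
      calc Metric.infDist x ↑S * ε ≤ Metric.infDist x ↑S * (ν' {x}).toReal :=
            mul_le_mul_of_nonneg_left (hεν' x hx) Metric.infDist_nonneg
        _ ≤ ∫ p, |p.1 - p.2| ∂(π.map Prod.swap) :=
            key_ineq ν' ν S' S hS' hS hsupp' hsupp (π.map Prod.swap) hs1 hs2 x hx
        _ = ∫ p, |p.1 - p.2| ∂π := heq
  calc Metric.hausdorffDist (↑S : Set ℝ) ↑S' * ε ≤ ((∫ p, |p.1 - p.2| ∂π) / ε) * ε :=
        mul_le_mul_of_nonneg_right hD hεpos.le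
    _ = ∫ p, |p.1 - p.2| ∂π := by field_simp
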